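/- The distributional Fourier transform of φ_2(z) = z j_2(z) = (3/z² − 1) sin z − (3/z) cos z equals π i [−3ξ χ_{(−1,1)}(ξ) − δ_{−1}(ξ) + δ_1(ξ)]; i.e. for every Schwartz ψ, ⟨F[φ_2], ψ⟩ = π i(−3∫_{−1}^1 ξ ψ(ξ) dξ − ψ(−1) + ψ(1)). -/

import Mathlib

open MeasureTheory Real

open FourierTransform in
private lemma lemA' (ψ : SchwartzMap ℝ ℂ) (z : ℝ) :
    (∫ ξ : ℝ, ψ ξ * Complex.exp (-Complex.I * z * ξ)) = 𝓕 (fun x => ψ x) (z / (2 * π)) := by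
  rw [Real.fourier_real_eq_integral_exp_smul]
  congr 1
  ext ξ
  rw [smul_eq_mul, mul_comm]
  congr 1
  have hπ : (π : ℂ) ≠ 0 := Complex.ofReal_ne_zero.2 Real.pi_ne_zero
  congr 1
  push_cast
  field_simp

open FourierTransform in
private lemma lemB' (ψ : SchwartzMap ℝ ℂ) (a : ℝ) :
    (∫ z : ℝ, 𝓕 (fun x => ψ x) (z / (2 * π)) * Complex.exp (Complex.I * z * a))
      = 2 * π * ψ a := by
  have hπ : (π : ℂ) ≠ 0 := Complex.ofReal_ne_zero.2 Real.pi_ne_zero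
  have h1 : (∫ z : ℝ, 𝓕 (fun x => ψ x) (z / (2 * π)) * Complex.exp (Complex.I * z * a))
      = |2 * π| • ∫ w : ℝ, 𝓕 (fun x => ψ x) w * Complex.exp (Complex.I * (2 * π * w) * a) := by
    rw [← MeasureTheory.Measure.integral_comp_div
      (fun w : ℝ => 𝓕 (fun x => ψ x) w * Complex.exp (Complex.I * (2 * π * w) * a)) (2 * π)]
    congr 1; ext z
    congr 2
    push_cast
    field_simp
  rw [h1]
  have hinv : 𝓕⁻ (𝓕 (fun x => ψ x)) a = ψ a := by
    rw [ψ.continuous.fourierInv_fourier_eq ψ.integrable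
      (SchwartzMap.fourierTransformCLM ℂ ψ).integrable]
  rw [Real.fourierInv_eq'] at hinv
  have h2 : (∫ w : ℝ, 𝓕 (fun x => ψ x) w * Complex.exp (Complex.I * (2 * π * w) * a))
      = ψ a := by
    rw [← hinv]
    congr 1; ext v
    rw [smul_eq_mul, mul_comm]
    congr 2
    push_cast
    simp [RCLike.inner_apply, conj_trivial]
    ring
  rw [h2]
  rw [abs_of_pos Real.two_pi_pos]
  simp [smul_eq_mul]

/-- φ₂(z) = z j₂(z) = (3/z² − 1) sin z − (3/z) cos z, with value 0 at z = 0. -/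
noncomputable def phiTwo (z : ℝ) : ℝ :=
  if z = 0 then 0 else (3 / z ^ 2 - 1) * Real.sin z - (3 / z) * Real.cos z

private lemma integral_t_exp' (z : ℝ) (hz : z ≠ 0) :
    (∫ t in (-1 : ℝ)..1, (t : ℂ) * Complex.exp (Complex.I * z * t))
      = Complex.exp (Complex.I * z) * (1 / (Complex.I * z) - 1 / (Complex.I * z) ^ 2)
        - Complex.exp (-(Complex.I * z)) * (-1 / (Complex.I * z) - 1 / (Complex.I * z) ^ 2) := by
  have hc : (Complex.I * z) ≠ 0 :=
    mul_ne_zero Complex.I_ne_zero (Complex.ofReal_ne_zero.2 hz)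
  set c : ℂ := Complex.I * z with hcdef
  have key : ∀ t : ℝ, HasDerivAt (fun s : ℝ => Complex.exp (c * s) * ((s : ℂ) / c - 1 / c ^ 2))
      ((t : ℂ) * Complex.exp (c * t)) t := by
    intro t
    have hE : HasDerivAt (fun w : ℂ => Complex.exp (c * w) * (w / c - 1 / c ^ 2))
        ((t : ℂ) * Complex.exp (c * t)) (t : ℂ) := by
      have h1 : HasDerivAt (fun w : ℂ => Complex.exp (c * w)) (c * Complex.exp (c * t)) (t : ℂ) := by
        have := (Complex.hasDerivAt_exp (c * t)).comp (t : ℂ)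
          ((hasDerivAt_id (t : ℂ)).const_mul c)
        simpa [Function.comp_def, mul_comm] using this
      have h2 : HasDerivAt (fun w : ℂ => w / c - 1 / c ^ 2) (1 / c) (t : ℂ) := by
        have := ((hasDerivAt_id (t : ℂ)).div_const c).sub_const (1 / c ^ 2)
        simpa using this
      have := h1.mul h2
      refine this.congr_deriv ?_
      field_simp
      ring
    exact hE.comp_ofReal
  have := intervalIntegral.integral_eq_sub_of_hasDerivAt (a := (-1 : ℝ)) (b := 1)
    (fun t _ => key t) ?_
  · rw [this]
    push_cast
    ring_nf
  · apply Continuous.intervalIntegrable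
    continuity

private lemma lemC' (z : ℝ) :
    (phiTwo z : ℂ) = Complex.I / 2 * (Complex.exp (Complex.I * z) - Complex.exp (-(Complex.I * z)))
      - 3 * Complex.I / 2 * ∫ t in (-1 : ℝ)..1, (t : ℂ) * Complex.exp (Complex.I * z * t) := by
  rcases eq_or_ne z 0 with rfl | hz
  · have h0 : (∫ t in (-1 : ℝ)..1, (t : ℂ) * Complex.exp (Complex.I * (0 : ℝ) * t)) = 0 := by
      simp only [Complex.ofReal_zero, mul_zero, zero_mul, Complex.exp_zero, mul_one]
      rw [show (fun t : ℝ => (t : ℂ)) = (fun t : ℝ => ((t : ℝ) : ℂ)) from rfl]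
      rw [intervalIntegral.integral_ofReal]
      norm_num
    rw [h0]
    simp [phiTwo]
  · rw [integral_t_exp' z hz]
    have hz' : (z : ℂ) ≠ 0 := Complex.ofReal_ne_zero.2 hz
    rw [phiTwo, if_neg hz]
    rw [show Complex.I * (z : ℂ) = (z : ℂ) * Complex.I by ring,
        show -((z : ℂ) * Complex.I) = (-(z : ℂ)) * Complex.I by ring,
        Complex.exp_mul_I, Complex.exp_mul_I, Complex.cos_neg, Complex.sin_neg]
    push_cast
    have h6 : (Complex.I) ^ 6 = -1 := by
      rw [show (6 : ℕ) = 4 + 2 from rfl, pow_add, Complex.I_pow_four, Complex.I_sq, one_mul]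
    have h8 : (Complex.I) ^ 8 = 1 := by
      rw [show (8 : ℕ) = 4 + 4 from rfl, pow_add, Complex.I_pow_four, one_mul]
    field_simp
    ring_nf
    rw [show Complex.I ^ 3 = -Complex.I by rw [pow_succ, Complex.I_sq]; ring]
    ring

set_option maxHeartbeats 2000000 in
open FourierTransform in
/-- The distributional Fourier transform of φ₂ is π i[−3ξ χ_{(−1,1)}(ξ) − δ_{−1} + δ_1]:
for every Schwartz ψ, ⟨F[φ₂], ψ⟩ = π i(−3∫_{−1}^1 ξ ψ(ξ) dξ − ψ(−1) + ψ(1)). -/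
theorem fourier_phiTwo (ψ : SchwartzMap ℝ ℂ) :
    (∫ z : ℝ, (phiTwo z : ℂ) * ∫ ξ : ℝ, ψ ξ * Complex.exp (-Complex.I * z * ξ))
      = (Real.pi : ℂ) * Complex.I *
          (-3 * (∫ ξ in (-1 : ℝ)..1, (ξ : ℂ) * ψ ξ) - ψ (-1) + ψ 1) := by
  have h2π : (2 * π : ℝ) ≠ 0 := by positivity
  set g : ℝ → ℂ := fun z => 𝓕 (fun x => ψ x) (z / (2 * π)) with hg
  set K : ℝ → ℂ := fun z => ∫ t in (-1 : ℝ)..1, (t : ℂ) * Complex.exp (Complex.I * z * t) with hK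
  -- integrability and continuity of g
  have hGi : Integrable g := by
    have : Integrable (𝓕 (fun x => ψ x)) := (SchwartzMap.fourierTransformCLM ℂ ψ).integrable
    exact this.comp_div h2π
  have hGc : Continuous g :=
    ((SchwartzMap.fourierTransformCLM ℂ ψ).continuous).comp (continuous_id.div_const _)
  -- step 1 : rewrite inner integral
  have step1 : (∫ z : ℝ, (phiTwo z : ℂ) * ∫ ξ : ℝ, ψ ξ * Complex.exp (-Complex.I * z * ξ))
      = ∫ z : ℝ, (phiTwo z : ℂ) * g z := by
    simp only [lemA' ψ, hg]
  rw [step1]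
  -- basic norms
  have hnorm : ∀ (z t : ℝ), ‖Complex.exp (Complex.I * z * t)‖ = 1 := by
    intro z t
    rw [Complex.norm_exp]
    simp
  -- integrability of exp(±iz) * g
  have h1 : Integrable (fun z : ℝ => Complex.exp (Complex.I * z) * g z) := by
    apply hGi.bdd_mul (c := 1)
    · exact (Complex.continuous_exp.comp (by continuity)).aestronglyMeasurable
    · exact Filter.Eventually.of_forall fun z => by simpa using (hnorm z 1).le
  have h2 : Integrable (fun z : ℝ => Complex.exp (-(Complex.I * z)) * g z) := by
    apply hGi.bdd_mul (c := 1)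
    · exact (Complex.continuous_exp.comp (by continuity)).aestronglyMeasurable
    · refine Filter.Eventually.of_forall fun z => ?_
      rw [Complex.norm_exp]
      simp
  -- the product function and its integrability
  set ν : Measure ℝ := volume.restrict (Set.Ioc (-1 : ℝ) 1) with hν
  haveI : Fact ((volume : Measure ℝ) (Set.Ioc (-1 : ℝ) 1) < ⊤) :=
    ⟨by rw [Real.volume_Ioc]; exact ENNReal.ofReal_lt_top⟩
  have hFc : Continuous (fun p : ℝ × ℝ =>
      (p.2 : ℂ) * Complex.exp (Complex.I * p.1 * p.2) * g p.1) := by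
    apply Continuous.mul
    · exact (Complex.continuous_ofReal.comp continuous_snd).mul
        (Complex.continuous_exp.comp (by continuity))
    · exact hGc.comp continuous_fst
  have hF : Integrable (fun p : ℝ × ℝ =>
      (p.2 : ℂ) * Complex.exp (Complex.I * p.1 * p.2) * g p.1) (volume.prod ν) := by
    rw [integrable_prod_iff hFc.aestronglyMeasurable]
    constructor
    · refine Filter.Eventually.of_forall fun z => ?_
      exact (Continuous.integrableOn_Ioc (by continuity))
    · apply Integrable.mono' (hGi.norm.const_mul 2)
      · exact (hFc.norm.aestronglyMeasurable.integral_prod_right')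
      · refine Filter.Eventually.of_forall fun z => ?_
        rw [norm_of_nonneg (integral_nonneg fun t => norm_nonneg _)]
        calc ∫ t, ‖(t : ℂ) * Complex.exp (Complex.I * z * t) * g z‖ ∂ν
            ≤ ∫ t, ‖g z‖ ∂ν := by
              apply integral_mono_of_nonneg
                (Filter.Eventually.of_forall fun t => norm_nonneg _)
                (integrable_const _)
              refine (ae_restrict_mem measurableSet_Ioc).mono fun t ht => ?_
              dsimp only
              rw [norm_mul, norm_mul, hnorm, mul_one, Complex.norm_real]
              have h1t : |t| ≤ 1 := by
                rw [abs_le]; exact ⟨ht.1.le, ht.2⟩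
              calc ‖t‖ * ‖g z‖ ≤ 1 * ‖g z‖ :=
                    mul_le_mul_of_nonneg_right h1t (norm_nonneg _)
                _ = ‖g z‖ := one_mul _
          _ = 2 * ‖g z‖ := by
              rw [integral_const]
              simp [hν, Real.volume_Ioc]
              norm_num
  -- integrability of K * g
  have h3 : Integrable (fun z : ℝ => K z * g z) := by
    have := hF.integral_prod_left
    refine this.congr (Filter.Eventually.of_forall fun z => ?_)
    dsimp only
    rw [hν, MeasureTheory.integral_mul_const,
      ← intervalIntegral.integral_of_le (by norm_num : (-1 : ℝ) ≤ 1)]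
  -- rewrite the integrand via lemC'
  have step2 : (∫ z : ℝ, (phiTwo z : ℂ) * g z)
      = ∫ z : ℝ, (Complex.I / 2 * (Complex.exp (Complex.I * z) * g z)
          - Complex.I / 2 * (Complex.exp (-(Complex.I * z)) * g z)
          - 3 * Complex.I / 2 * (K z * g z)) := by
    congr 1; ext z
    rw [lemC' z]
    ring
  rw [step2]
  have hsub1 : Integrable (fun z : ℝ => Complex.I / 2 * (Complex.exp (Complex.I * z) * g z)
      - Complex.I / 2 * (Complex.exp (-(Complex.I * z)) * g z)) := by
    exact (h1.const_mul (Complex.I / 2)).sub (h2.const_mul (Complex.I / 2))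
  rw [integral_sub hsub1 (h3.const_mul _),
      integral_sub (h1.const_mul _) (h2.const_mul _),
      MeasureTheory.integral_const_mul, MeasureTheory.integral_const_mul,
      MeasureTheory.integral_const_mul]
  -- evaluate the three integrals
  have e1 : (∫ z : ℝ, Complex.exp (Complex.I * z) * g z) = 2 * π * ψ 1 := by
    rw [← lemB' ψ 1]
    congr 1; ext z
    rw [mul_comm]
    congr 1
    norm_num
  have e2 : (∫ z : ℝ, Complex.exp (-(Complex.I * z)) * g z) = 2 * π * ψ (-1) := by
    rw [← lemB' ψ (-1)]
    congr 1; ext z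
    rw [mul_comm]
    congr 1
    push_cast
    ring
  have e3 : (∫ z : ℝ, K z * g z) = 2 * π * ∫ ξ in (-1 : ℝ)..1, (ξ : ℂ) * ψ ξ := by
    have swap1 : (∫ z : ℝ, K z * g z)
        = ∫ z : ℝ, ∫ t, (t : ℂ) * Complex.exp (Complex.I * z * t) * g z ∂ν := by
      congr 1; ext z
      rw [hν, MeasureTheory.integral_mul_const,
        ← intervalIntegral.integral_of_le (by norm_num : (-1 : ℝ) ≤ 1)]
    have hswap := MeasureTheory.integral_integral_swap
      (f := fun z t : ℝ => (t : ℂ) * Complex.exp (Complex.I * z * t) * g z)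
      (μ := volume) (ν := ν) (by exact hF)
    rw [swap1, hswap]
    have inner : ∀ t : ℝ, (∫ z : ℝ, (t : ℂ) * Complex.exp (Complex.I * z * t) * g z)
        = (t : ℂ) * (2 * π * ψ t) := by
      intro t
      rw [← lemB' ψ t, ← MeasureTheory.integral_const_mul]
      congr 1; ext z
      ring
    calc (∫ t, ∫ z : ℝ, (t : ℂ) * Complex.exp (Complex.I * z * t) * g z ∂volume ∂ν)
        = ∫ t, (t : ℂ) * (2 * π * ψ t) ∂ν := by
          congr 1; ext t; exact inner t
      _ = ∫ t in (-1 : ℝ)..1, (t : ℂ) * (2 * π * ψ t) := by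
          rw [intervalIntegral.integral_of_le (by norm_num : (-1 : ℝ) ≤ 1)]
      _ = 2 * π * ∫ ξ in (-1 : ℝ)..1, (ξ : ℂ) * ψ ξ := by
          rw [← intervalIntegral.integral_const_mul]
          congr 1; ext t
          ring
  rw [e1, e2, e3]
  ring
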